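/- (Classical bottleneck theorem.) Let χ be a finite set, let M : χ × χ → [0,1] be a column-stochastic Markov kernel (Σ_{x∈χ} M(x,y) = 1 for every y ∈ χ) with stationary distribution π (i.e. Σ_y M(x,y)π(y) = π(x) for all x). Let χ = A ⊎ B₁ ⊎ B₂ ⊎ C be a partition such that M(x,y) = 0 whenever (x ∈ B₂ ∪ C and y ∈ A) or (x ∈ A ∪ B₁ and y ∈ C), and assume π(A) > 0. Define the restricted distribution π^{(A)}(x) = π(x)·1_A(x)/π(A). Then Σ_{x∈χ} | Σ_{y∈χ} M(x,y)π^{(A)}(y) − π^{(A)}(x) | ≤ 2·π(B₁ ∪ B₂)/π(A). -/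

import Mathlib

/-- classical bottleneck theorem: let `χ` be finite,
`M : χ × χ → [0,1]` a column-stochastic Markov kernel with stationary
distribution `π`, and `χ = A ⊎ B₁ ⊎ B₂ ⊎ C` a partition such that `M(x,y) = 0`
whenever (`x ∈ B₂ ∪ C` and `y ∈ A`) or (`x ∈ A ∪ B₁` and `y ∈ C`), and
`π(A) > 0`. Then the restriction `π^{(A)}` of `π` to `A` satisfies
`Σ_x |(Mπ^{(A)})(x) − π^{(A)}(x)| ≤ 2·π(B₁ ∪ B₂)/π(A)`. -/
theorem bottleneck_theorem {χ : Type*} [Fintype χ] [DecidableEq χ]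
    (M : χ → χ → ℝ) (hM0 : ∀ x y, 0 ≤ M x y) (hM1 : ∀ x y, M x y ≤ 1)
    (hstoch : ∀ y, ∑ x, M x y = 1)
    (π : χ → ℝ) (hπ0 : ∀ x, 0 ≤ π x) (hπ1 : ∑ x, π x = 1)
    (hstat : ∀ x, ∑ y, M x y * π y = π x)
    (A B₁ B₂ C : Finset χ)
    (hAB₁ : Disjoint A B₁) (hAB₂ : Disjoint A B₂) (hAC : Disjoint A C)
    (hB₁B₂ : Disjoint B₁ B₂) (hB₁C : Disjoint B₁ C) (hB₂C : Disjoint B₂ C)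
    (hcover : A ∪ B₁ ∪ B₂ ∪ C = Finset.univ)
    (hblock₁ : ∀ x y, x ∈ B₂ ∪ C → y ∈ A → M x y = 0)
    (hblock₂ : ∀ x y, x ∈ A ∪ B₁ → y ∈ C → M x y = 0)
    (hA : 0 < ∑ x ∈ A, π x) :
    let πA : χ → ℝ := fun x => (if x ∈ A then π x else 0) / ∑ z ∈ A, π z
    ∑ x, |(∑ y, M x y * πA y) - πA x| ≤
      2 * (∑ x ∈ B₁ ∪ B₂, π x) / ∑ x ∈ A, π x := by
  intro πA
  set s := ∑ x ∈ A, π x with hs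
  set S := ∑ x ∈ B₁ ∪ B₂, π x with hS
  have hsplit : (Finset.univ : Finset χ) = A ∪ B₁ ∪ B₂ ∪ C := hcover.symm
  have d1 : Disjoint (A ∪ B₁ ∪ B₂) C := by
    simp [Finset.disjoint_union_left, hAC, hB₁C, hB₂C]
  have d2 : Disjoint (A ∪ B₁) B₂ := by
    simp [Finset.disjoint_union_left, hAB₂, hB₁B₂]
  have hfnn : ∀ x, 0 ≤ ∑ y ∈ A, M x y * π y :=
    fun x => Finset.sum_nonneg fun y _ => mul_nonneg (hM0 x y) (hπ0 y)
  have hfle : ∀ x, ∑ y ∈ A, M x y * π y ≤ π x := by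
    intro x
    calc ∑ y ∈ A, M x y * π y ≤ ∑ y, M x y * π y :=
          Finset.sum_le_sum_of_subset_of_nonneg (Finset.subset_univ A)
            (fun y _ _ => mul_nonneg (hM0 x y) (hπ0 y))
      _ = π x := hstat x
  have key : ∀ x, (∑ y, M x y * πA y) - πA x
      = ((∑ y ∈ A, M x y * π y) - (if x ∈ A then π x else 0)) / s := by
    intro x
    have h1 : ∑ y, M x y * πA y = (∑ y ∈ A, M x y * π y) / s := by
      simp only [πA, ← mul_div_assoc, ← Finset.sum_div, hs]
      congr 1
      simp [mul_ite, mul_zero, Finset.sum_ite_mem]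
    rw [h1]
    simp only [πA]
    rw [div_sub_div_same]
  have hsum : ∑ x, |(∑ y, M x y * πA y) - πA x|
      = (∑ x, |(∑ y ∈ A, M x y * π y) - (if x ∈ A then π x else 0)|) / s := by
    rw [Finset.sum_div]
    refine Finset.sum_congr rfl fun x _ => ?_
    rw [key x, abs_div, abs_of_pos hA]
  have main : ∑ x, |(∑ y ∈ A, M x y * π y) - (if x ∈ A then π x else 0)| ≤ 2 * S := by
    rw [hsplit, Finset.sum_union d1, Finset.sum_union d2, Finset.sum_union hAB₁]
    have tA : ∑ x ∈ A, |(∑ y ∈ A, M x y * π y) - (if x ∈ A then π x else 0)| ≤ S := by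
      have e : ∀ x ∈ A, |(∑ y ∈ A, M x y * π y) - (if x ∈ A then π x else 0)|
          = ∑ y ∈ B₁ ∪ B₂, M x y * π y := by
        intro x hx
        rw [if_pos hx, abs_sub_comm, abs_of_nonneg (sub_nonneg.mpr (hfle x))]
        have h0 := hstat x
        rw [hsplit, Finset.sum_union d1, Finset.sum_union d2, Finset.sum_union hAB₁] at h0
        have hC : ∑ y ∈ C, M x y * π y = 0 :=
          Finset.sum_eq_zero fun y hy => by
            rw [hblock₂ x y (Finset.mem_union_left _ hx) hy, zero_mul]
        rw [Finset.sum_union hB₁B₂]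
        linarith [h0, hC]
      rw [Finset.sum_congr rfl e]
      calc ∑ x ∈ A, ∑ y ∈ B₁ ∪ B₂, M x y * π y
          = ∑ y ∈ B₁ ∪ B₂, ∑ x ∈ A, M x y * π y := Finset.sum_comm
        _ = ∑ y ∈ B₁ ∪ B₂, (∑ x ∈ A, M x y) * π y := by
            refine Finset.sum_congr rfl fun y _ => ?_
            rw [Finset.sum_mul]
        _ ≤ ∑ y ∈ B₁ ∪ B₂, 1 * π y := by
            refine Finset.sum_le_sum fun y _ => ?_
            refine mul_le_mul_of_nonneg_right ?_ (hπ0 y)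
            calc ∑ x ∈ A, M x y ≤ ∑ x, M x y :=
                  Finset.sum_le_sum_of_subset_of_nonneg (Finset.subset_univ A)
                    (fun x _ _ => hM0 x y)
              _ = 1 := hstoch y
        _ = S := by simp [hS]
    have tB₁ : ∑ x ∈ B₁, |(∑ y ∈ A, M x y * π y) - (if x ∈ A then π x else 0)| ≤ S := by
      have e : ∀ x ∈ B₁, |(∑ y ∈ A, M x y * π y) - (if x ∈ A then π x else 0)|
          ≤ π x := by
        intro x hx
        rw [if_neg (Finset.disjoint_left.mp hAB₁.symm hx), sub_zero,
          abs_of_nonneg (hfnn x)]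
        exact hfle x
      calc ∑ x ∈ B₁, |(∑ y ∈ A, M x y * π y) - (if x ∈ A then π x else 0)|
          ≤ ∑ x ∈ B₁, π x := Finset.sum_le_sum e
        _ ≤ S := Finset.sum_le_sum_of_subset_of_nonneg
            (Finset.subset_union_left) (fun x _ _ => hπ0 x)
    have tB₂ : ∑ x ∈ B₂, |(∑ y ∈ A, M x y * π y) - (if x ∈ A then π x else 0)| = 0 := by
      refine Finset.sum_eq_zero fun x hx => ?_
      rw [if_neg (Finset.disjoint_left.mp hAB₂.symm hx)]
      have : ∑ y ∈ A, M x y * π y = 0 :=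
        Finset.sum_eq_zero fun y hy => by
          rw [hblock₁ x y (Finset.mem_union_left _ hx) hy, zero_mul]
      rw [this, sub_zero, abs_zero]
    have tC : ∑ x ∈ C, |(∑ y ∈ A, M x y * π y) - (if x ∈ A then π x else 0)| = 0 := by
      refine Finset.sum_eq_zero fun x hx => ?_
      rw [if_neg (Finset.disjoint_left.mp hAC.symm hx)]
      have : ∑ y ∈ A, M x y * π y = 0 :=
        Finset.sum_eq_zero fun y hy => by
          rw [hblock₁ x y (Finset.mem_union_right _ hx) hy, zero_mul]
      rw [this, sub_zero, abs_zero]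
    linarith [tA, tB₁, tB₂, tC]
  rw [hsum]
  gcongr
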